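/- (Ceiling-discretization lower bound) Let ε > 0, K > 0, let B be a positive integer, and let γ_i ≥ 0 for products i. Let S′ and S* be finite sets of products with |S′| ≤ B, Σ_{i∈S′} ⌈γ_i B/(εK)⌉ ≥ Σ_{i∈S*} ⌈γ_i B/(εK)⌉, and Σ_{i∈S*} γ_i ≥ K/(1+ε). Then Σ_{i∈S′} γ_i ≥ (1 − ε(1+ε)) Σ_{i∈S*} γ_i. -/

import Mathlib

/-- ceiling-discretization lower bound. -/
theorem stmt10 (ε K : ℝ) (hε : 0 < ε) (hK : 0 < K) (B : ℕ) (hB : 0 < B)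
    (γ : ℕ → ℝ) (hγ : ∀ i, 0 ≤ γ i)
    (S' Sstar : Finset ℕ) (hcard : S'.card ≤ B)
    (hceil : (∑ i ∈ Sstar, ⌈γ i * (B : ℝ) / (ε * K)⌉)
      ≤ ∑ i ∈ S', ⌈γ i * (B : ℝ) / (ε * K)⌉)
    (hlow : K / (1 + ε) ≤ ∑ i ∈ Sstar, γ i) :
    (1 - ε * (1 + ε)) * ∑ i ∈ Sstar, γ i ≤ ∑ i ∈ S', γ i := by
  have hBpos : (0:ℝ) < B := by exact_mod_cast hB
  set c : ℝ := ε * K / B with hc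
  have hcpos : 0 < c := by positivity
  have key : ∀ i, c * (γ i * (B : ℝ) / (ε * K)) = γ i := by
    intro i
    field_simp [hc]
    rw [hc]; field_simp
  have h1 : ∀ i, γ i ≤ c * (⌈γ i * (B : ℝ) / (ε * K)⌉ : ℝ) := by
    intro i
    calc γ i = c * (γ i * (B : ℝ) / (ε * K)) := (key i).symm
      _ ≤ c * (⌈γ i * (B : ℝ) / (ε * K)⌉ : ℝ) :=
          mul_le_mul_of_nonneg_left (Int.le_ceil _) hcpos.le
  have h2 : ∀ i, c * (⌈γ i * (B : ℝ) / (ε * K)⌉ : ℝ) ≤ γ i + c := by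
    intro i
    have h := Int.ceil_lt_add_one (γ i * (B : ℝ) / (ε * K))
    have := mul_le_mul_of_nonneg_left h.le hcpos.le
    calc c * (⌈γ i * (B : ℝ) / (ε * K)⌉ : ℝ)
        ≤ c * (γ i * (B : ℝ) / (ε * K) + 1) := this
      _ = γ i + c := by rw [mul_add, key i, mul_one]
  -- sums
  have hs1 : ∑ i ∈ Sstar, γ i ≤ c * ∑ i ∈ Sstar, (⌈γ i * (B : ℝ) / (ε * K)⌉ : ℝ) := by
    rw [Finset.mul_sum]
    exact Finset.sum_le_sum fun i _ => h1 i
  have hs2 : c * ∑ i ∈ S', (⌈γ i * (B : ℝ) / (ε * K)⌉ : ℝ)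
      ≤ (∑ i ∈ S', γ i) + c * S'.card := by
    rw [Finset.mul_sum]
    calc ∑ i ∈ S', c * (⌈γ i * (B : ℝ) / (ε * K)⌉ : ℝ)
        ≤ ∑ i ∈ S', (γ i + c) := Finset.sum_le_sum fun i _ => h2 i
      _ = (∑ i ∈ S', γ i) + c * S'.card := by
          rw [Finset.sum_add_distrib, Finset.sum_const, nsmul_eq_mul, mul_comm]
  have hceilR : (∑ i ∈ Sstar, (⌈γ i * (B : ℝ) / (ε * K)⌉ : ℝ))
      ≤ ∑ i ∈ S', (⌈γ i * (B : ℝ) / (ε * K)⌉ : ℝ) := by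
    exact_mod_cast hceil
  have hcards : c * (S'.card : ℝ) ≤ ε * K := by
    have : (S'.card : ℝ) ≤ B := by exact_mod_cast hcard
    calc c * (S'.card : ℝ) ≤ c * B := mul_le_mul_of_nonneg_left this hcpos.le
      _ = ε * K := by rw [hc]; field_simp
  have hchain : ∑ i ∈ Sstar, γ i ≤ (∑ i ∈ S', γ i) + ε * K := by
    have := mul_le_mul_of_nonneg_left hceilR hcpos.le
    linarith [hs1, hs2]
  have hK' : K ≤ (1 + ε) * ∑ i ∈ Sstar, γ i := by
    rw [div_le_iff₀ (by linarith)] at hlow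
    linarith [hlow]
  nlinarith [hchain, hK', hε.le]
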